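/- Let n ∈ ℕ and z₁, …, zₙ ∈ ℂ, and let f := (1 + (z₁𝐣)t)·(1 + (z₂𝐣)t)·⋯·(1 + (zₙ𝐣)t) ∈ ℍ[t], the product taken in increasing order of the index. Let r ∈ ℝ[t] be the real polynomial whose coefficient of t^m is the real part of the coefficient of t^m in f. Then r = 1 + Σ_{k=1}^{⌊n/2⌋} (−1)^k·I_k·t^{2k}, where I_k := Σ_{1 ≤ i₁ < i₂ < ⋯ < i_{2k} ≤ n} Re( z_{i₁}·conj(z_{i₂})·z_{i₃}·conj(z_{i₄})·⋯·z_{i_{2k−1}}·conj(z_{i_{2k}}) ), the product and real part being taken in ℂ. -/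

import Mathlib

open Polynomial

/-- The quaternion `z𝐣 = x𝐣 + y𝐤` for a complex number `z = x + iy`. -/
def toQj (z : ℂ) : Quaternion ℝ := ⟨0, 0, z.re, z.im⟩

/-- For a list of indices `[i₁, …, i_m]`, the alternating product
`z_{i₁} · conj(z_{i₂}) · z_{i₃} · conj(z_{i₄}) ⋯` in `ℂ`. -/
noncomputable def altProd (z : ℕ → ℂ) (l : List ℕ) : ℂ :=
  (l.zipIdx.map fun p => if p.2 % 2 = 0 then z p.1 else (starRingEnd ℂ) (z p.1)).prod

/-- The recutting invariant
`I_k = Σ_{1 ≤ i₁ < ⋯ < i_{2k} ≤ n} Re(z_{i₁} conj(z_{i₂}) ⋯ z_{i_{2k-1}} conj(z_{i_{2k}}))`. -/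
noncomputable def recutInv (n : ℕ) (z : ℕ → ℂ) (k : ℕ) : ℝ :=
  ∑ s ∈ (Finset.Icc 1 n).powersetCard (2 * k), (altProd z (s.sort (· ≤ ·))).re

namespace RePartAux

/-- The complex number `a` viewed as a quaternion. -/
def cQ (a : ℂ) : Quaternion ℝ := ⟨a.re, a.im, 0, 0⟩

@[simp] lemma cQ_re (a : ℂ) : (cQ a).re = a.re := rfl
@[simp] lemma toQj_re (a : ℂ) : (toQj a).re = 0 := rfl
lemma cQ_one : cQ 1 = 1 := rfl
lemma cQ_zero : cQ 0 = 0 := rfl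
lemma toQj_zero : toQj 0 = 0 := rfl

lemma cQ_add (a b : ℂ) : cQ (a + b) = cQ a + cQ b := by
  ext <;> simp only [Quaternion.re_add, Quaternion.imI_add, Quaternion.imJ_add, Quaternion.imK_add] <;> simp [cQ]

lemma toQj_add (a b : ℂ) : toQj (a + b) = toQj a + toQj b := by
  ext <;> simp only [Quaternion.re_add, Quaternion.imI_add, Quaternion.imJ_add, Quaternion.imK_add] <;> simp [toQj]

lemma cQ_mul_toQj (a w : ℂ) : cQ a * toQj w = toQj (a * w) := by
  ext <;> simp only [Quaternion.re_mul, Quaternion.imI_mul, Quaternion.imJ_mul,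
    Quaternion.imK_mul] <;> simp [cQ, toQj] <;> ring

lemma toQj_mul_toQj (b w : ℂ) : toQj b * toQj w = cQ (-(b * (starRingEnd ℂ) w)) := by
  ext <;> simp only [Quaternion.re_mul, Quaternion.imI_mul, Quaternion.imJ_mul,
    Quaternion.imK_mul] <;> simp [cQ, toQj] <;> ring

lemma altProd_nil (z : ℕ → ℂ) : altProd z [] = 1 := rfl

lemma altProd_concat (z : ℕ → ℂ) (l : List ℕ) (a : ℕ) :
    altProd z (l ++ [a]) =
      altProd z l * (if l.length % 2 = 0 then z a else (starRingEnd ℂ) (z a)) := by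
  simp [altProd, List.zipIdx_append]

lemma sort_insert_max {a : ℕ} {s : Finset ℕ} (h1 : ∀ b ∈ s, b ≤ a) (h2 : a ∉ s) :
    (insert a s).sort (· ≤ ·) = s.sort (· ≤ ·) ++ [a] := by
  refine (fun hp h2 => List.Perm.eq_of_pairwise' (Finset.pairwise_sort _ _) h2 hp) ?_ ?_
  · exact ((Finset.sort_perm_toList (r := (· ≤ ·)) _).trans (Finset.toList_insert h2)).trans
      (((Finset.sort_perm_toList (r := (· ≤ ·)) s).symm.cons a).trans
        (List.perm_append_singleton _ _).symm)
  · refine List.pairwise_append.mpr ⟨Finset.pairwise_sort _ _, List.pairwise_singleton _ a, ?_⟩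
    intro x hx y hy
    simp only [List.mem_singleton] at hy
    subst hy
    exact h1 x (by simpa using (Finset.mem_sort (α := ℕ) (· ≤ ·)).mp hx)

/-- `S z n m = Σ_{s ⊆ Icc 1 n, |s| = m} altProd z (sort s)`. -/
noncomputable def S (z : ℕ → ℂ) (n m : ℕ) : ℂ :=
  ∑ s ∈ (Finset.Icc 1 n).powersetCard m, altProd z (s.sort (· ≤ ·))

lemma S_def (z : ℕ → ℂ) (n m : ℕ) :
    S z n m = ∑ s ∈ (Finset.Icc 1 n).powersetCard m, altProd z (s.sort (· ≤ ·)) := rfl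

lemma S_zero (z : ℕ → ℂ) (n : ℕ) : S z n 0 = 1 := by
  simp [S, altProd_nil]

lemma S_eq_zero (z : ℕ → ℂ) {n m : ℕ} (h : n < m) : S z n m = 0 := by
  rw [S, Finset.powersetCard_eq_empty.mpr (by simpa using h), Finset.sum_empty]

lemma S_succ (z : ℕ → ℂ) (n m : ℕ) :
    S z (n + 1) (m + 1) = S z n (m + 1) +
      S z n m * (if m % 2 = 0 then z (n + 1) else (starRingEnd ℂ) (z (n + 1))) := by
  have hnot : (n + 1) ∉ Finset.Icc 1 n := by simp
  have hIcc : Finset.Icc 1 (n + 1) = insert (n + 1) (Finset.Icc 1 n) :=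
    (Finset.insert_Icc_right_eq_Icc_add_one (by omega)).symm
  rw [S, hIcc, Finset.powersetCard_succ_insert hnot, Finset.sum_union, Finset.sum_image]
  · congr 1
    simp only [S]
    rw [Finset.sum_mul]
    apply Finset.sum_congr rfl
    intro s hs
    obtain ⟨hsub, hcard⟩ := Finset.mem_powersetCard.mp hs
    have h1 : ∀ b ∈ s, b ≤ n + 1 := fun b hb => by
      have := Finset.mem_Icc.mp (hsub hb); omega
    have h2 : (n + 1) ∉ s := fun h => hnot (hsub h)
    rw [sort_insert_max h1 h2, altProd_concat, Finset.length_sort, hcard]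
  · intro x hx y hy hxy
    have hxn : (n+1) ∉ x := fun h => hnot ((Finset.mem_powersetCard.mp hx).1 h)
    have hyn : (n+1) ∉ y := fun h => hnot ((Finset.mem_powersetCard.mp hy).1 h)
    rw [← Finset.erase_insert hxn, hxy, Finset.erase_insert hyn]
  · rw [Finset.disjoint_left]
    rintro t ht1 ht2
    obtain ⟨u, hu, rfl⟩ := Finset.mem_image.mp ht2
    exact hnot ((Finset.mem_powersetCard.mp ht1).1 (Finset.mem_insert_self _ _))

lemma S_zero_n (z : ℕ → ℂ) (m : ℕ) : S z 0 m = if m = 0 then 1 else 0 := by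
  cases m with
  | zero => simp [S_zero]
  | succ m => simp [S_eq_zero z (Nat.succ_pos m)]

lemma coeff_prod (z : ℕ → ℂ) (n m : ℕ) :
    (((List.range n).map fun k => 1 + C (toQj (z (k + 1))) * X).prod).coeff m =
      if m % 2 = 0 then cQ ((-1) ^ (m / 2) * S z n m)
      else toQj ((-1) ^ (m / 2) * S z n m) := by
  induction n generalizing m with
  | zero =>
    simp only [List.range_zero, List.map_nil, List.prod_nil, coeff_one, S_zero_n]
    rcases Nat.eq_zero_or_pos m with rfl | hm
    · simp [cQ_one]
    · have hm0 : m ≠ 0 := by omega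
      simp only [hm0, if_false, mul_zero]
      split <;> simp [cQ_zero, toQj_zero]
  | succ n ih =>
    rw [List.range_succ, List.map_append, List.prod_append, List.map_singleton,
      List.prod_singleton, mul_add, mul_one, coeff_add, ← mul_assoc]
    cases m with
    | zero =>
      rw [coeff_mul_X_zero, add_zero, ih, if_pos (by omega), if_pos (by omega),
        S_zero, S_zero]
    | succ m =>
      rw [coeff_mul_X, coeff_mul_C, ih, ih]
      obtain ⟨k, rfl | rfl⟩ := Nat.even_or_odd' m
      · have h1 : 2 * k % 2 = 0 := by omega
        have h3 : (2 * k + 1) / 2 = k := by omega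
        have h4 : 2 * k / 2 = k := by omega
        rw [if_neg (by omega), if_pos h1, if_neg (by omega), h3, h4, S_succ,
          if_pos h1, cQ_mul_toQj, ← toQj_add]
        congr 1
        ring
      · have h2 : (2 * k + 1 + 1) % 2 = 0 := by omega
        have h3 : (2 * k + 1 + 1) / 2 = k + 1 := by omega
        have h4 : (2 * k + 1) / 2 = k := by omega
        rw [if_pos h2, if_pos h2, if_neg (by omega), h3, h4, S_succ,
          if_neg (by omega), toQj_mul_toQj, ← cQ_add]
        congr 1
        ring

end RePartAux

open RePartAux in
/-- The real part of the polynomial `f = (1 + (z₁𝐣)t) ⋯ (1 + (zₙ𝐣)t)` is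
`1 + Σ_{k=1}^{⌊n/2⌋} (-1)^k I_k t^{2k}`, where `I_k` are the recutting invariants. -/
theorem re_part_of_edge_product (n : ℕ) (z : ℕ → ℂ)
    (r : Polynomial ℝ)
    (hr : ∀ m : ℕ,
      r.coeff m = ((((List.range n).map fun k => 1 + C (toQj (z (k + 1))) * X).prod).coeff m).re) :
    r = 1 + ∑ k ∈ Finset.Icc 1 (n / 2), C ((-1 : ℝ) ^ k * recutInv n z k) * X ^ (2 * k) := by
  ext m
  rw [hr, coeff_prod, coeff_add, coeff_one, finset_sum_coeff]
  simp only [coeff_C_mul, coeff_X_pow, mul_ite, mul_one, mul_zero]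
  have hre : ∀ j : ℕ, (S z n (2 * j)).re = recutInv n z j := by
    intro j
    rw [S_def, recutInv, Complex.re_sum]
  obtain ⟨j, rfl | rfl⟩ := Nat.even_or_odd' m
  · rw [if_pos (by omega), cQ_re]
    have hpow : ((-1 : ℂ)) ^ (2 * j / 2) = (((-1 : ℝ) ^ j : ℝ) : ℂ) := by
      push_cast
      rw [Nat.mul_div_cancel_left j (by norm_num)]
    rw [hpow, Complex.re_ofReal_mul, hre]
    have hcong : ∀ x ∈ Finset.Icc 1 (n / 2),
        (if 2 * j = 2 * x then (-1 : ℝ) ^ x * recutInv n z x else 0) =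
          (if j = x then (-1 : ℝ) ^ x * recutInv n z x else 0) := by
      intro x _
      rcases eq_or_ne j x with rfl | h
      · simp
      · rw [if_neg (by omega), if_neg h]
    rw [Finset.sum_congr rfl hcong, Finset.sum_ite_eq]
    rcases Nat.eq_zero_or_pos j with rfl | hj
    · rw [if_pos (by simp), if_neg (by simp), ← hre, mul_zero, S_zero]
      simp
    · rw [if_neg (by omega)]
      by_cases hle : 2 * j ≤ n
      · rw [if_pos (by rw [Finset.mem_Icc]; omega), zero_add]
      · rw [if_neg (by rw [Finset.mem_Icc]; omega), ← hre,
          S_eq_zero z (by omega), zero_add]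
        simp
  · rw [if_neg (by omega), toQj_re]
    have hcong : ∀ k ∈ Finset.Icc 1 (n / 2),
        (if 2 * j + 1 = 2 * k then (-1 : ℝ) ^ k * recutInv n z k else 0) = 0 := by
      intro k _
      rw [if_neg (by omega)]
    rw [Finset.sum_congr rfl hcong, Finset.sum_const_zero, if_neg (by omega)]
    simp
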